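/- arXiv:2205.09964 — 6 statements merged into one kernel-verified Lean document; each statement's English description precedes it below -/
import Mathlib

section
/- For every f ∈ A there exists a nonzero element h ∈ A such that: (i) there exists a k-algebra homomorphism g : A → k with g(h) ≠ 0; and (ii) for every k-algebra homomorphism g : A → k with g(h) ≠ 0, the value ‖x(g•f)‖ equals the supremum of ‖x(g'•f)‖ over all k-algebra homomorphisms g' : A → k. In particular this supremum is finite and is attained on a nonempty Zariski-open set of k-points. -/
open TensorProduct

/-- The translate `g • f` of an element `f` of a bialgebra `A` by a `k`-point
`g : A →ₐ[k] k`: the image of the comultiplication `Δ f ∈ A ⊗[k] A` under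
`g ⊗ id` followed by the identification `k ⊗[k] A ≅ A`. -/
noncomputable def ptTranslate {k A : Type*} [CommSemiring k] [Semiring A]
    [Bialgebra k A] (g : A →ₐ[k] k) (f : A) : A :=
  (TensorProduct.lid k A)
    ((TensorProduct.map g.toLinearMap (LinearMap.id : A →ₗ[k] A))
      (Coalgebra.comul (R := k) f))

theorem statement0
    {k A L : Type*} [Field k] [IsAlgClosed k]
    [CommRing A] [IsDomain A] [HopfAlgebra k A]
    (hfg : Algebra.FiniteType k A)
    [Field L] [Algebra k L]
    (v : L → NNReal)
    (hmul : ∀ a b : L, v (a * b) = v a * v b)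
    (hadd : ∀ a b : L, v (a + b) ≤ max (v a) (v b))
    (hzero : ∀ a : L, v a = 0 ↔ a = 0)
    (htriv : ∀ c : k, c ≠ 0 → v (algebraMap k L c) = 1)
    (x : A →ₐ[k] L) (f : A) :
    ∃ h : A, h ≠ 0 ∧ (∃ g : A →ₐ[k] k, g h ≠ 0) ∧
      ∀ g : A →ₐ[k] k, g h ≠ 0 →
        v (x (ptTranslate g f)) = ⨆ g' : A →ₐ[k] k, v (x (ptTranslate g' f)) := by
  classical
  have hv0 : v 0 = 0 := (hzero 0).2 rfl
  have hvsmul : ∀ (c : k), c ≠ 0 → ∀ y : L, v (c • y) = v y := by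
    intro c hc y
    rw [Algebra.smul_def, hmul, htriv c hc, one_mul]
  -- if v y < v z then v (z - y) = v z
  have hkey2 : ∀ y z : L, v y < v z → v (z - y) = v z := by
    intro y z hlt
    have hvneg : v (-y) = v y := by
      have := hvsmul (-1) (by norm_num) y
      simpa using this
    have h1 : v (z - y) ≤ v z := by
      have := hadd z (-y)
      rw [hvneg] at this
      simpa [sub_eq_add_neg] using this.trans (max_le le_rfl hlt.le)
    have h2 : v z ≤ v (z - y) := by
      have := hadd (z - y) y
      simp only [sub_add_cancel] at this
      rcases max_cases (v (z - y)) (v y) with ⟨he, _⟩ | ⟨he, _⟩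
      · rwa [he] at this
      · rw [he] at this; exact absurd (lt_of_le_of_lt this hlt) (lt_irrefl _)
    exact le_antisymm h1 h2
  -- finiteness of the value set on a finitely generated subspace
  have finlem : ∀ s : Finset L, (v '' (Submodule.span k (↑s : Set L) : Set L)).Finite := by
    intro s
    induction s using Finset.induction_on with
    | empty =>
      have hset : ((Submodule.span k (↑(∅ : Finset L) : Set L) : Set L)) = {0} := by
        simp
      rw [hset]
      exact (Set.finite_singleton 0).image v
    | @insert a s ha ih =>
      set D' := v '' (Submodule.span k (↑s : Set L) : Set L) with hD'
      set D := v '' (Submodule.span k (↑(insert a s) : Set L) : Set L) with hD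
      have step : ∀ u₁ ∈ Submodule.span k (↑s : Set L), ∀ u₂ ∈ Submodule.span k (↑s : Set L),
          v (a + u₁) < v (a + u₂) → v (a + u₂) ∈ D' := by
        intro u₁ h₁ u₂ h₂ hlt
        have hdiff : (a + u₂) - (a + u₁) = u₂ - u₁ := by ring
        refine ⟨u₂ - u₁, Submodule.sub_mem _ h₂ h₁, ?_⟩
        rw [← hdiff, hkey2 _ _ hlt]
      have hsub : (D \ D').Subsingleton := by
        rintro r₁ ⟨⟨y₁, hy₁, rfl⟩, hr₁⟩ r₂ ⟨⟨y₂, hy₂, rfl⟩, hr₂⟩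
        simp only [Finset.coe_insert, SetLike.mem_coe, Submodule.mem_span_insert] at hy₁ hy₂
        obtain ⟨c₁, w₁, hw₁, rfl⟩ := hy₁
        obtain ⟨c₂, w₂, hw₂, rfl⟩ := hy₂
        have hc₁ : c₁ ≠ 0 := by
          rintro rfl
          exact hr₁ ⟨w₁, hw₁, by simp⟩
        have hc₂ : c₂ ≠ 0 := by
          rintro rfl
          exact hr₂ ⟨w₂, hw₂, by simp⟩
        have e₁ : v (c₁ • a + w₁) = v (a + c₁⁻¹ • w₁) := by
          rw [← hvsmul c₁ hc₁ (a + c₁⁻¹ • w₁), smul_add, smul_inv_smul₀ hc₁]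
        have e₂ : v (c₂ • a + w₂) = v (a + c₂⁻¹ • w₂) := by
          rw [← hvsmul c₂ hc₂ (a + c₂⁻¹ • w₂), smul_add, smul_inv_smul₀ hc₂]
        have m₁ : c₁⁻¹ • w₁ ∈ Submodule.span k (↑s : Set L) := Submodule.smul_mem _ _ hw₁
        have m₂ : c₂⁻¹ • w₂ ∈ Submodule.span k (↑s : Set L) := Submodule.smul_mem _ _ hw₂
        rw [e₁, e₂]
        by_contra hne
        rcases lt_or_gt_of_ne hne with hlt | hlt
        · exact hr₂ (e₂ ▸ step _ m₁ _ m₂ hlt)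
        · exact hr₁ (e₁ ▸ step _ m₂ _ m₁ hlt)
      have hDsub : D ⊆ D' ∪ (D \ D') := fun r hr =>
        (em (r ∈ D')).elim Or.inl fun h => Or.inr ⟨hr, h⟩
      exact ((ih.union hsub.finite).subset hDsub)
  -- expand comul f as a finite sum of simple tensors
  obtain ⟨S, hS⟩ := TensorProduct.exists_finset (Coalgebra.comul (R := k) f)
  have hxpt : ∀ g : A →ₐ[k] k, x (ptTranslate g f) = ∑ p ∈ S, g p.1 • x p.2 := by
    intro g
    rw [ptTranslate, hS, map_sum, map_sum, map_sum]
    refine Finset.sum_congr rfl fun p _ => ?_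
    simp [TensorProduct.lid_tmul]
  set ts : Finset L := S.image (fun p => x p.2) with hts
  have hmemspan : ∀ g : A →ₐ[k] k,
      (∑ p ∈ S, g p.1 • x p.2) ∈ Submodule.span k (↑ts : Set L) := by
    intro g
    refine Submodule.sum_mem _ fun p hp => Submodule.smul_mem _ _ (Submodule.subset_span ?_)
    exact Finset.mem_coe.2 (Finset.mem_image_of_mem _ hp)
  set R : Set NNReal := Set.range (fun g : A →ₐ[k] k => v (x (ptTranslate g f))) with hR
  have hRfin : R.Finite := by
    refine (finlem ts).subset ?_
    rintro _ ⟨g, rfl⟩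
    exact ⟨_, hmemspan g, (congrArg v (hxpt g)).symm⟩
  have hRne : R.Nonempty := ⟨_, ⟨Bialgebra.counitAlgHom k A, rfl⟩⟩
  set M : NNReal := ⨆ g' : A →ₐ[k] k, v (x (ptTranslate g' f)) with hMdef
  have hMmem : M ∈ R := hRne.csSup_mem hRfin
  obtain ⟨g₀, hg₀⟩ := hMmem
  have hg₀' : v (x (ptTranslate g₀ f)) = M := hg₀
  have hle : ∀ g : A →ₐ[k] k, v (x (ptTranslate g f)) ≤ M :=
    fun g => le_ciSup hRfin.bddAbove g
  by_cases hM0 : M = 0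
  · refine ⟨1, one_ne_zero, ⟨Bialgebra.counitAlgHom k A, by simp⟩, ?_⟩
    intro g _
    have h1 := hle g
    rw [hM0] at h1
    rw [hM0]
    simpa using h1
  · have hMpos : 0 < M := pos_iff_ne_zero.mpr hM0
    -- the submodule of elements of value < M
    set W₀ : Submodule k L :=
      { carrier := {y : L | v y < M}
        add_mem' := fun {y z} hy hz => lt_of_le_of_lt (hadd y z) (max_lt hy hz)
        zero_mem' := by simpa [hv0] using hMpos
        smul_mem' := by
          intro c y hy
          by_cases hc : c = 0
          · simpa [hc, hv0] using hMpos
          · simpa [hvsmul c hc] using hy } with hW₀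
    have hkeyg₀ : (∑ p ∈ S, g₀ p.1 • x p.2) ∉ W₀ := by
      intro hmem
      have : v (∑ p ∈ S, g₀ p.1 • x p.2) < M := hmem
      rw [← hxpt, hg₀'] at this
      exact lt_irrefl _ this
    have hq : W₀.mkQ (∑ p ∈ S, g₀ p.1 • x p.2) ≠ 0 := by
      rw [Submodule.mkQ_apply, Ne, Submodule.Quotient.mk_eq_zero]
      exact hkeyg₀
    have hexμ : ¬ ∀ φ : Module.Dual k (L ⧸ W₀), φ (W₀.mkQ (∑ p ∈ S, g₀ p.1 • x p.2)) = 0 := by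
      rw [Module.forall_dual_apply_eq_zero_iff]
      exact hq
    push_neg at hexμ
    obtain ⟨μ, hμ⟩ := hexμ
    set lam : L →ₗ[k] k := μ.comp W₀.mkQ with hlam
    have hlamW₀ : ∀ y ∈ W₀, lam y = 0 := by
      intro y hy
      have : W₀.mkQ y = 0 := by
        rw [Submodule.mkQ_apply, Submodule.Quotient.mk_eq_zero]; exact hy
      simp [hlam, LinearMap.comp_apply, this]
    have hgh : ∀ g : A →ₐ[k] k,
        g (∑ p ∈ S, lam (x p.2) • p.1) = lam (∑ p ∈ S, g p.1 • x p.2) := by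
      intro g
      rw [map_sum, map_sum]
      refine Finset.sum_congr rfl fun p _ => ?_
      rw [map_smul, map_smul, smul_eq_mul, smul_eq_mul, mul_comm]
    refine ⟨∑ p ∈ S, lam (x p.2) • p.1, ?_, ?_, ?_⟩
    · -- h ≠ 0
      intro h0
      have : g₀ (∑ p ∈ S, lam (x p.2) • p.1) = 0 := by rw [h0, map_zero]
      rw [hgh g₀] at this
      exact hμ this
    · -- existence of g with g h ≠ 0
      refine ⟨g₀, ?_⟩
      rw [hgh g₀]
      exact hμ
    · -- every g with g h ≠ 0 attains the sup
      intro g hg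
      rw [hgh g] at hg
      have hnot : (∑ p ∈ S, g p.1 • x p.2) ∉ W₀ := fun hmem => hg (hlamW₀ _ hmem)
      have hge : M ≤ v (x (ptTranslate g f)) := by
        rw [hxpt]
        exact le_of_not_gt hnot
      exact le_antisymm (hle g) hge
end

section
/- Let f be a nonzero element of the fraction field Frac(A), written as f = p/q with p, q ∈ A, q ≠ 0. Then there exists a nonzero element h ∈ A such that: (i) there exists a k-algebra homomorphism g : A → k with g(h) ≠ 0; and (ii) for every k-algebra homomorphism g : A → k with g(h) ≠ 0 one has x(g•q) ≠ 0, and the quotient ‖x(g•p)‖ / ‖x(g•q)‖ takes the same value for all such g; moreover this common value does not depend on the chosen representation f = p/q. -/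
open TensorProduct

open Coalgebra HopfAlgebra

theorem exists_point {k A : Type*} [Field k] [IsAlgClosed k] [CommRing A] [IsDomain A]
    [Algebra k A] (hfg : Algebra.FiniteType k A) (h : A) (hh : h ≠ 0) :
    ∃ g : A →ₐ[k] k, g h ≠ 0 := by
  obtain ⟨n, f, hf⟩ := Algebra.FiniteType.iff_quotient_mvPolynomial''.mp hfg
  obtain ⟨H, rfl⟩ := hf h
  have hker : (RingHom.ker f).IsPrime := RingHom.ker_isPrime f
  have hHnot : H ∉ RingHom.ker f := by simpa [RingHom.mem_ker] using hh
  have hnv : H ∉ MvPolynomial.vanishingIdeal k (MvPolynomial.zeroLocus k (RingHom.ker f)) := by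
    rw [MvPolynomial.vanishingIdeal_zeroLocus_eq_radical, hker.radical]
    exact hHnot
  rw [MvPolynomial.mem_vanishingIdeal_iff] at hnv
  push_neg at hnv
  obtain ⟨z, hz, hez⟩ := hnv
  have haeval : ∀ p : MvPolynomial (Fin n) k, (MvPolynomial.aeval z) p = MvPolynomial.eval z p := by
    intro p
    rw [MvPolynomial.aeval_def, Algebra.algebraMap_self]
    rfl
  have hlift : ∀ p ∈ RingHom.ker (f : MvPolynomial (Fin n) k →ₐ[k] A),
      (MvPolynomial.aeval z : MvPolynomial (Fin n) k →ₐ[k] k) p = 0 := by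
    intro p hp
    rw [haeval]
    exact hz p hp
  let e := Ideal.quotientKerAlgEquivOfSurjective hf
  refine ⟨(Ideal.Quotient.liftₐ (RingHom.ker f) (MvPolynomial.aeval z) hlift).comp
    (e.symm : A →ₐ[k] _), ?_⟩
  have hsymm : e.symm (f H) = Ideal.Quotient.mk (RingHom.ker f) H := by
    apply e.injective
    simp only [AlgEquiv.apply_symm_apply]
    rfl
  simp only [AlgHom.coe_comp, Function.comp_apply, AlgEquiv.coe_algHom, hsymm]
  erw [Ideal.Quotient.liftₐ_apply, Ideal.Quotient.lift_mk]
  rw [show ((MvPolynomial.aeval z : MvPolynomial (Fin n) k →ₐ[k] k) : MvPolynomial (Fin n) k →+* k) H = (MvPolynomial.aeval z) H from rfl, haeval]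
  exact hez


lemma phi_alpha {k A L : Type*} [CommRing k] [CommRing A] [HopfAlgebra k A]
    [CommRing L] [Algebra k L] (x : A →ₐ[k] L) (f : A) :
    ∃ Φ : A ⊗[k] L →ₗ[k] A ⊗[k] L,
      Φ ((LinearMap.lTensor A x.toLinearMap) (Coalgebra.comul (R := k) f))
        = f ⊗ₜ[k] (1 : L) := by
  classical
  set S : A →ₗ[k] L := x.toLinearMap ∘ₗ HopfAlgebra.antipode (R := k) with hS
  set β : A →ₗ[k] A ⊗[k] L := (LinearMap.lTensor A S) ∘ₗ Coalgebra.comul with hβ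
  refine ⟨TensorProduct.lift (((LinearMap.mul k (A ⊗[k] L)).comp β).compl₂
    (Algebra.TensorProduct.includeRight (R := k) (A := A) (B := L)).toLinearMap), ?_⟩
  set r : Coalgebra.Repr k f (A × A) := Coalgebra.Repr.arbitrary k f
  set a₁ : (i : r.ι) → Coalgebra.Repr k (r.left i) (A × A) := fun i => Coalgebra.Repr.arbitrary k _
  set a₂ : (i : r.ι) → Coalgebra.Repr k (r.right i) (A × A) := fun i => Coalgebra.Repr.arbitrary k _
  -- expand comul f via r
  rw [← r.eq]
  rw [map_sum, map_sum]
  -- LHS: sum over i of β(left i) * (1 ⊗ x(right i))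
  have hterm : ∀ i ∈ r.index,
      (TensorProduct.lift (((LinearMap.mul k (A ⊗[k] L)).comp β).compl₂
        (Algebra.TensorProduct.includeRight (R := k) (A := A) (B := L)).toLinearMap))
        ((LinearMap.lTensor A x.toLinearMap) (r.left i ⊗ₜ[k] r.right i))
      = ∑ j ∈ (a₁ i).index, (a₁ i).left j ⊗ₜ[k] (S ((a₁ i).right j) * x (r.right i)) := by
    intro i _
    rw [LinearMap.lTensor_tmul, TensorProduct.lift.tmul]
    simp only [LinearMap.compl₂_apply, LinearMap.comp_apply, AlgHom.toLinearMap_apply,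
      Algebra.TensorProduct.includeRight_apply, LinearMap.mul_apply']
    rw [hβ]
    simp only [LinearMap.comp_apply]
    rw [← (a₁ i).eq]
    rw [map_sum, Finset.sum_mul]
    refine Finset.sum_congr rfl fun j _ => ?_
    rw [LinearMap.lTensor_tmul]
    rw [Algebra.TensorProduct.tmul_mul_tmul, mul_one]
  rw [Finset.sum_congr rfl hterm]
  -- use coassociativity
  have key := Coalgebra.sum_tmul_tmul_eq (R := k) r a₁ a₂
  have key2 := congrArg (TensorProduct.map (LinearMap.id (R := k) (M := A))
    ((LinearMap.mul' k L) ∘ₗ TensorProduct.map S x.toLinearMap)) key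
  simp only [map_sum, TensorProduct.map_tmul, LinearMap.comp_apply, LinearMap.mul'_apply,
    LinearMap.id_coe, id_eq, AlgHom.toLinearMap_apply] at key2
  rw [key2]
  -- now compute the a₂ side
  have hx : ∀ i ∈ r.index,
      ∑ j ∈ (a₂ i).index, r.left i ⊗ₜ[k] (S ((a₂ i).left j) * x ((a₂ i).right j))
      = Coalgebra.counit (R := k) (r.right i) • (r.left i ⊗ₜ[k] (1 : L)) := by
    intro i _
    rw [← TensorProduct.tmul_sum]
    have : ∑ j ∈ (a₂ i).index, S ((a₂ i).left j) * x ((a₂ i).right j)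
        = Coalgebra.counit (R := k) (r.right i) • (1 : L) := by
      rw [hS]
      simp only [LinearMap.comp_apply, AlgHom.toLinearMap_apply]
      calc ∑ j ∈ (a₂ i).index, x (HopfAlgebra.antipode (R := k) ((a₂ i).left j)) * x ((a₂ i).right j)
          = x (∑ j ∈ (a₂ i).index, HopfAlgebra.antipode (R := k) ((a₂ i).left j) * (a₂ i).right j) := by
            rw [map_sum]
            exact Finset.sum_congr rfl fun j _ => (map_mul x _ _).symm
        _ = x (algebraMap k A (Coalgebra.counit (r.right i))) := by
            rw [HopfAlgebra.sum_antipode_mul_eq_algebraMap_counit (a₂ i)]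
        _ = Coalgebra.counit (R := k) (r.right i) • 1 := by
            rw [AlgHom.commutes, Algebra.algebraMap_eq_smul_one]
    rw [this, TensorProduct.tmul_smul]
  rw [Finset.sum_congr rfl hx]
  have final := Coalgebra.sum_tmul_counit_eq (R := k) r
  have final2 := congrArg (LinearMap.lTensor A (Algebra.linearMap k L)) final
  simp only [map_sum, LinearMap.lTensor_tmul, Algebra.linearMap_apply, map_one] at final2
  rw [← final2]
  refine Finset.sum_congr rfl fun i _ => ?_
  rw [Algebra.algebraMap_eq_smul_one, TensorProduct.tmul_smul]


noncomputable def ptTranslateAlgHom {k A : Type*} [CommSemiring k] [CommSemiring A]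
    [Bialgebra k A] (g : A →ₐ[k] k) : A →ₐ[k] A :=
  (Algebra.TensorProduct.lid k A).toAlgHom.comp
    ((Algebra.TensorProduct.map g (AlgHom.id k A)).comp (Bialgebra.comulAlgHom k A))

lemma ptTranslate_eq {k A : Type*} [CommSemiring k] [CommSemiring A]
    [Bialgebra k A] (g : A →ₐ[k] k) (f : A) :
    ptTranslate g f = ptTranslateAlgHom g f := by
  unfold ptTranslate ptTranslateAlgHom
  simp only [AlgHom.coe_comp, Function.comp_apply, AlgEquiv.toAlgHom_eq_coe,
    AlgHom.coe_coe, Bialgebra.comulAlgHom_apply]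
  generalize Coalgebra.comul (R := k) f = t
  induction t using TensorProduct.induction_on with
  | zero => simp
  | tmul a b => simp
  | add u w hu hw => simp only [map_add, hu, hw]

lemma ptTranslate_mul {k A : Type*} [CommSemiring k] [CommSemiring A]
    [Bialgebra k A] (g : A →ₐ[k] k) (a b : A) :
    ptTranslate g (a * b) = ptTranslate g a * ptTranslate g b := by
  simp only [ptTranslate_eq, map_mul]

lemma x_ptTranslate {k A L : Type*} [CommSemiring k] [Semiring A] [Bialgebra k A]
    [Semiring L] [Algebra k L] (x : A →ₐ[k] L) (g : A →ₐ[k] k) (f : A) :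
    x (ptTranslate g f) =
      (TensorProduct.lid k L)
        ((TensorProduct.map g.toLinearMap (LinearMap.id : L →ₗ[k] L))
          ((LinearMap.lTensor A x.toLinearMap) (Coalgebra.comul (R := k) f))) := by
  unfold ptTranslate
  generalize Coalgebra.comul (R := k) f = t
  induction t using TensorProduct.induction_on with
  | zero => simp
  | tmul a b => simp
  | add u w hu hw => simp only [map_add, hu, hw]

section Val
variable {k L : Type*} [Field k] [Field L] [Algebra k L]
variable (v : L → NNReal)
variable (hmul : ∀ a b : L, v (a * b) = v a * v b)
variable (hadd : ∀ a b : L, v (a + b) ≤ max (v a) (v b))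
variable (hzero : ∀ a : L, v a = 0 ↔ a = 0)
variable (htriv : ∀ c : k, c ≠ 0 → v (algebraMap k L c) = 1)

include hmul htriv in
lemma v_smul (c : k) (w : L) (hc : c ≠ 0) : v (c • w) = v w := by
  rw [Algebra.smul_def, hmul, htriv c hc, one_mul]

include hmul hadd hzero htriv in
lemma vSubLe_mem (r : NNReal) : ∃ W : Submodule k L, ∀ w, w ∈ W ↔ v w ≤ r := by
  refine ⟨⟨⟨⟨{w | v w ≤ r}, ?_⟩, ?_⟩, ?_⟩, fun w => Iff.rfl⟩
  · intro a b ha hb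
    exact le_trans (hadd a b) (max_le ha hb)
  · show v 0 ≤ r
    rw [(hzero 0).mpr rfl]
    exact zero_le
  · intro c w hw
    show v (c • w) ≤ r
    by_cases hc : c = 0
    · subst hc; rw [zero_smul, (hzero 0).mpr rfl]; exact zero_le
    · rw [v_smul v hmul htriv c w hc]; exact hw

include hmul hadd hzero htriv in
lemma vSubLt_mem (r : NNReal) (hr : 0 < r) : ∃ W : Submodule k L, ∀ w, w ∈ W ↔ v w < r := by
  refine ⟨⟨⟨⟨{w | v w < r}, ?_⟩, ?_⟩, ?_⟩, fun w => Iff.rfl⟩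
  · intro a b ha hb
    exact lt_of_le_of_lt (hadd a b) (max_lt ha hb)
  · show v 0 < r
    rw [(hzero 0).mpr rfl]; exact hr
  · intro c w hw
    show v (c • w) < r
    by_cases hc : c = 0
    · subst hc; rw [zero_smul, (hzero 0).mpr rfl]; exact hr
    · rw [v_smul v hmul htriv c w hc]; exact hw

include hmul hadd hzero htriv in
lemma finite_values (W : Submodule k L) [FiniteDimensional k W] :
    (v '' ((W : Set L) \ {0})).Finite := by
  classical
  set SS := v '' ((W : Set L) \ {0})
  have hsub : ∀ r : NNReal, ∃ Wr : Submodule k L, ∀ w, w ∈ Wr ↔ v w ≤ r :=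
    fun r => vSubLe_mem v hmul hadd hzero htriv r
  choose Wle hWle using hsub
  set F : NNReal → ℕ := fun r => Module.finrank k ((Wle r) ⊓ W : Submodule k L)
  have hmono : ∀ r r', r ∈ SS → r' ∈ SS → r < r' → F r < F r' := by
    intro r r' _ hr' hlt
    obtain ⟨w', hw'W, hw'v⟩ := hr'
    have : FiniteDimensional k ((Wle r') ⊓ W : Submodule k L) :=
      Submodule.finiteDimensional_of_le inf_le_right
    apply Submodule.finrank_lt_finrank_of_lt
    refine lt_of_le_of_ne (inf_le_inf_right W ?_) ?_
    · intro w hw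
      rw [hWle r'] at *
      exact le_trans ((hWle r w).mp hw) hlt.le
    · intro heq
      have hmem : w' ∈ (Wle r') ⊓ W := by
        refine ⟨(hWle r' w').mpr ?_, hw'W.1⟩
        rw [hw'v]
      rw [← heq] at hmem
      have := (hWle r w').mp hmem.1
      rw [hw'v] at this
      exact absurd this (not_le.mpr hlt)
  have hinj : Set.InjOn F SS := by
    intro r hr r' hr' heq
    by_contra hne
    rcases lt_or_gt_of_ne hne with h | h
    · exact absurd heq (ne_of_lt (hmono r r' hr hr' h))
    · exact absurd heq.symm (ne_of_lt (hmono r' r hr' hr h))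
  have himg : (F '' SS).Finite := by
    apply Set.Finite.subset (Set.finite_Icc 0 (Module.finrank k W))
    rintro n ⟨r, _, rfl⟩
    have : FiniteDimensional k ((Wle r) ⊓ W : Submodule k L) :=
      Submodule.finiteDimensional_of_le inf_le_right
    exact ⟨Nat.zero_le _, Submodule.finrank_mono inf_le_right⟩
  exact Set.Finite.of_finite_image himg hinj
end Val

lemma rep_lemma {k A L : Type*} [Field k] [AddCommGroup A] [Module k A]
    [AddCommGroup L] [Module k L] (t : A ⊗[k] L) (ht : t ≠ 0) :
    ∃ (n : ℕ) (u : Finset (Fin n)) (f : Fin n → A) (lam : Fin n → L),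
      u.Nonempty ∧ (∀ j ∈ u, f j ≠ 0) ∧ LinearIndependent k lam ∧
        t = ∑ j ∈ u, f j ⊗ₜ[k] lam j := by
  classical
  obtain ⟨s, hs⟩ := TensorProduct.exists_finset t
  set W : Submodule k L := Submodule.span k (↑(s.image Prod.snd) : Set L) with hW
  have hWfd : FiniteDimensional k W := FiniteDimensional.span_finset k (s.image Prod.snd)
  set n := Module.finrank k W with hn
  set c : Module.Basis (Fin n) k W := Module.finBasis k W
  set wp : {p // p ∈ s} → W := fun p =>
    ⟨(p : A × L).2, Submodule.subset_span (by
      simp only [Finset.coe_image, Set.mem_image, Finset.mem_coe]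
      exact ⟨(p : A × L), p.2, rfl⟩)⟩ with hwp
  set f : Fin n → A := fun j => ∑ p ∈ s.attach, (c.repr (wp p) j) • (p : A × L).1 with hf
  set lam : Fin n → L := fun j => ((c j : W) : L) with hlam
  have hli : LinearIndependent k lam := by
    have := c.linearIndependent
    exact this.map' W.subtype W.ker_subtype
  have ht2 : t = ∑ j : Fin n, f j ⊗ₜ[k] lam j := by
    rw [hs, ← Finset.sum_attach s (fun p => p.1 ⊗ₜ[k] p.2)]
    have hterm : ∀ p : {p // p ∈ s}, ((p : A × L).1 ⊗ₜ[k] (p : A × L).2)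
        = ∑ j : Fin n, (c.repr (wp p) j • (p : A × L).1) ⊗ₜ[k] lam j := by
      intro p
      have hval : (p : A × L).2 = ∑ j : Fin n, c.repr (wp p) j • lam j := by
        have := c.sum_repr (wp p)
        have := congrArg (W.subtype) this
        simp only [map_sum, map_smul, Submodule.coe_subtype] at this
        exact this.symm
      rw [hval, TensorProduct.tmul_sum]
      exact Finset.sum_congr rfl fun j _ => (TensorProduct.smul_tmul _ _ _).symm
    rw [Finset.sum_congr rfl (fun p _ => hterm p), Finset.sum_comm]
    refine Finset.sum_congr rfl fun j _ => ?_
    rw [hf, ← TensorProduct.sum_tmul]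
  set u : Finset (Fin n) := Finset.univ.filter (fun j => f j ≠ 0) with hu
  have ht3 : t = ∑ j ∈ u, f j ⊗ₜ[k] lam j := by
    rw [ht2]
    symm
    apply Finset.sum_subset (Finset.filter_subset _ _)
    intro j _ hj
    simp only [hu, Finset.mem_filter, Finset.mem_univ, true_and, not_not] at hj
    rw [hj, TensorProduct.zero_tmul]
  refine ⟨n, u, f, lam, ?_, ?_, hli, ht3⟩
  · by_contra hemp
    rw [Finset.not_nonempty_iff_eq_empty] at hemp
    rw [hemp, Finset.sum_empty] at ht3
    exact ht ht3
  · intro j hj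
    simpa [hu] using (Finset.mem_filter.mp hj).2

lemma key_lemma {k A L : Type*} [Field k] [IsAlgClosed k] [CommRing A] [IsDomain A]
    [Algebra k A] (hfg : Algebra.FiniteType k A) [Field L] [Algebra k L]
    (v : L → NNReal)
    (hmul : ∀ a b : L, v (a * b) = v a * v b)
    (hadd : ∀ a b : L, v (a + b) ≤ max (v a) (v b))
    (hzero : ∀ a : L, v a = 0 ↔ a = 0)
    (htriv : ∀ c : k, c ≠ 0 → v (algebraMap k L c) = 1)
    (t : A ⊗[k] L) (ht : t ≠ 0) :
    ∃ h : A, h ≠ 0 ∧ ∃ r : NNReal, 0 < r ∧ ∀ g : A →ₐ[k] k, g h ≠ 0 →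
      v ((TensorProduct.lid k L)
        ((TensorProduct.map g.toLinearMap (LinearMap.id : L →ₗ[k] L)) t)) = r := by
  classical
  obtain ⟨n, u, f, lam, hune, hfne, hli, hrep⟩ := rep_lemma t ht
  set E : (A →ₐ[k] k) → L := fun g =>
    (TensorProduct.lid k L) ((TensorProduct.map g.toLinearMap (LinearMap.id : L →ₗ[k] L)) t)
    with hE
  have hEeq : ∀ g : A →ₐ[k] k, E g = ∑ j ∈ u, g (f j) • lam j := by
    intro g
    rw [hE]
    simp only [hrep, map_sum, TensorProduct.map_tmul, LinearMap.id_coe, id_eq,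
      TensorProduct.lid_tmul, AlgHom.toLinearMap_apply]
  set W : Submodule k L := Submodule.span k (Set.range lam) with hW
  have hWfd : FiniteDimensional k W := FiniteDimensional.span_of_finite k (Set.finite_range lam)
  have hEW : ∀ g : A →ₐ[k] k, E g ∈ W := by
    intro g
    rw [hEeq]
    exact Submodule.sum_smul_mem W _ fun j _ => Submodule.subset_span ⟨j, rfl⟩
  -- the achieved set is finite
  have hAVsub : Set.range (fun g : A →ₐ[k] k => v (E g)) ⊆
      insert 0 (v '' ((W : Set L) \ {0})) := by
    rintro r ⟨g, rfl⟩
    by_cases h0 : E g = 0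
    · have : v (E g) = 0 := by rw [h0]; exact (hzero 0).mpr rfl
      show v (E g) ∈ _
      rw [this]
      exact Set.mem_insert _ _
    · exact Set.mem_insert_of_mem _ ⟨E g, ⟨hEW g, h0⟩, rfl⟩
  have hAVfin : (Set.range (fun g : A →ₐ[k] k => v (E g))).Finite :=
    Set.Finite.subset (Set.Finite.insert 0 (finite_values v hmul hadd hzero htriv W)) hAVsub
  have hAVne : (Set.range (fun g : A →ₐ[k] k => v (E g))).Nonempty := by
    obtain ⟨g₀, -⟩ := exists_point hfg 1 one_ne_zero
    exact ⟨v (E g₀), g₀, rfl⟩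
  obtain ⟨r, hrmem, hrmax'⟩ := Set.Finite.exists_maximalFor id _ hAVfin hAVne
  have hle : ∀ g : A →ₐ[k] k, v (E g) ≤ r := by
    intro g
    by_contra hcon
    push_neg at hcon
    have := @hrmax' (v (E g)) ⟨g, rfl⟩ (le_of_lt hcon)
    simp only [id_eq] at this
    exact absurd hcon (not_lt.mpr this)
  have hattain : ∃ g : A →ₐ[k] k, v (E g) = r := hrmem
  -- r is positive
  have hprodne : (∏ j ∈ u, f j) ≠ 0 := Finset.prod_ne_zero_iff.mpr hfne
  obtain ⟨g₀, hg₀⟩ := exists_point hfg _ hprodne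
  have hg₀j : ∀ j ∈ u, g₀ (f j) ≠ 0 := by
    rw [map_prod] at hg₀
    exact fun j hj => Finset.prod_ne_zero_iff.mp hg₀ j hj
  have hE₀ : E g₀ ≠ 0 := by
    rw [hEeq]
    intro hcon
    obtain ⟨j₀, hj₀⟩ := hune
    exact hg₀j j₀ hj₀ (linearIndependent_iff'.mp hli u _ hcon j₀ hj₀)
  have hrpos : 0 < r := by
    refine lt_of_lt_of_le ?_ (hle g₀)
    exact pos_iff_ne_zero.mpr fun hcon => hE₀ ((hzero _).mp hcon)
  -- the subspace of elements of valuation < r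
  obtain ⟨Wlt, hWlt⟩ := vSubLt_mem v hmul hadd hzero htriv r hrpos
  set Lam : (Fin n → k) →ₗ[k] L := ∑ j ∈ u, (LinearMap.proj j).smulRight (lam j) with hLam
  have hLamapp : ∀ c : Fin n → k, Lam c = ∑ j ∈ u, c j • lam j := by
    intro c
    rw [hLam]
    simp [LinearMap.sum_apply]
  set phi : (A →ₐ[k] k) → (Fin n → k) := fun g j => if j ∈ u then g (f j) else 0 with hphi
  have hEphi : ∀ g : A →ₐ[k] k, E g = Lam (phi g) := by
    intro g
    rw [hEeq, hLamapp]
    exact Finset.sum_congr rfl fun j hj => by rw [hphi]; simp [hj]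
  set U : Submodule k (Fin n → k) := Wlt.comap Lam with hU
  obtain ⟨gm, hgm⟩ := hattain
  have hgmU : phi gm ∉ U := by
    intro hcon
    rw [hU, Submodule.mem_comap] at hcon
    have := (hWlt _).mp hcon
    rw [← hEphi, hgm] at this
    exact lt_irrefl r this
  have hmkQ : U.mkQ (phi gm) ≠ 0 := by
    rw [Submodule.mkQ_apply, ne_eq, Submodule.Quotient.mk_eq_zero]
    exact hgmU
  have hxi : ∃ xi0 : Module.Dual k ((Fin n → k) ⧸ U), xi0 (U.mkQ (phi gm)) ≠ 0 := by
    by_contra hcon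
    push_neg at hcon
    exact hmkQ ((Module.forall_dual_apply_eq_zero_iff k _).mp hcon)
  obtain ⟨xi0, hxi0⟩ := hxi
  set xi : (Fin n → k) →ₗ[k] k := xi0 ∘ₗ U.mkQ with hxiq
  have hxiU : ∀ c ∈ U, xi c = 0 := by
    intro c hc
    rw [hxiq]
    simp only [LinearMap.comp_apply, Submodule.mkQ_apply]
    rw [(Submodule.Quotient.mk_eq_zero U).mpr hc, map_zero]
  set h : A := ∑ j ∈ u, xi (Pi.single j (1 : k) : Fin n → k) • f j with hh
  have hgh : ∀ g : A →ₐ[k] k, g h = xi (phi g) := by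
    intro g
    have hphisum : phi g = ∑ j ∈ u, g (f j) • (Pi.single j (1 : k) : Fin n → k) := by
      funext j'
      rw [Finset.sum_apply]
      by_cases hj' : j' ∈ u
      · rw [hphi]
        simp only [hj', if_true]
        rw [Finset.sum_eq_single j']
        · simp
        · intro j hj hne
          simp [Pi.single_apply, Ne.symm hne]
        · intro hcon; exact absurd hj' hcon
      · rw [hphi]
        simp only [hj', if_false]
        symm
        apply Finset.sum_eq_zero
        intro j hj
        have : j ≠ j' := fun hc => hj' (hc ▸ hj)
        simp [Pi.single_apply, this.symm]
    rw [hphisum, map_sum, map_sum]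
    refine Finset.sum_congr rfl fun j hj => ?_
    rw [map_smul, map_smul]
    simp [mul_comm]
  have hhne : h ≠ 0 := by
    intro hcon
    apply hxi0
    have := hgh gm
    rw [hcon, map_zero] at this
    rw [hxiq] at this
    exact this.symm
  refine ⟨h, hhne, r, hrpos, fun g hg => ?_⟩
  refine le_antisymm (hle g) ?_
  by_contra hcon
  push_neg at hcon
  have : E g ∈ Wlt := (hWlt _).mpr hcon
  have hUU : phi g ∈ U := by
    rw [hU, Submodule.mem_comap, ← hEphi]
    exact (hWlt _).mpr hcon
  exact hg (by rw [hgh g, hxiU _ hUU])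

lemma alpha_ne_zero {k A L : Type*} [Field k] [CommRing A] [HopfAlgebra k A]
    [Field L] [Algebra k L] (x : A →ₐ[k] L) {f : A} (hf : f ≠ 0) :
    (LinearMap.lTensor A x.toLinearMap) (Coalgebra.comul (R := k) f) ≠ 0 := by
  intro h0
  obtain ⟨Φ, hΦ⟩ := phi_alpha x f
  rw [h0, map_zero] at hΦ
  apply hf
  have hinj : Function.Injective
      ((Algebra.linearMap k L).lTensor A : A ⊗[k] k →ₗ[k] A ⊗[k] L) :=
    Module.Flat.lTensor_preserves_injective_linearMap (M := A) (Algebra.linearMap k L)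
      (algebraMap k L).injective
  have h1 : ((Algebra.linearMap k L).lTensor A) ((TensorProduct.rid k A).symm f)
      = f ⊗ₜ[k] (1 : L) := by
    rw [TensorProduct.rid_symm_apply, LinearMap.lTensor_tmul, Algebra.linearMap_apply, map_one]
  have h2 : (TensorProduct.rid k A).symm f = 0 := by
    apply hinj
    rw [h1, map_zero, ← hΦ]
  have := congrArg (TensorProduct.rid k A) h2
  rwa [LinearEquiv.apply_symm_apply, map_zero] at this

/-- For a nonzero element `f = p / q` of `Frac A`, the value `‖x(g • p)‖ / ‖x(g • q)‖` is
constant for `g` in a nonempty Zariski-open set of `k`-points, and the common value is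
independent of the representation `f = p / q`. -/
theorem statement1
    {k A L : Type*} [Field k] [IsAlgClosed k]
    [CommRing A] [IsDomain A] [HopfAlgebra k A]
    (hfg : Algebra.FiniteType k A)
    [Field L] [Algebra k L]
    (v : L → NNReal)
    (hmul : ∀ a b : L, v (a * b) = v a * v b)
    (hadd : ∀ a b : L, v (a + b) ≤ max (v a) (v b))
    (hzero : ∀ a : L, v a = 0 ↔ a = 0)
    (htriv : ∀ c : k, c ≠ 0 → v (algebraMap k L c) = 1)
    (x : A →ₐ[k] L) (p q : A) (hp : p ≠ 0) (hq : q ≠ 0) :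
    ∃ h : A, h ≠ 0 ∧ (∃ g : A →ₐ[k] k, g h ≠ 0) ∧
      ∃ c : NNReal,
        (∀ g : A →ₐ[k] k, g h ≠ 0 →
          x (ptTranslate g q) ≠ 0 ∧
            v (x (ptTranslate g p)) / v (x (ptTranslate g q)) = c) ∧
        (∀ p' q' : A, q' ≠ 0 → p * q' = p' * q →
          ∃ h' : A, h' ≠ 0 ∧ (∃ g : A →ₐ[k] k, g h' ≠ 0) ∧
            ∀ g : A →ₐ[k] k, g h' ≠ 0 →
              x (ptTranslate g q') ≠ 0 ∧
                v (x (ptTranslate g p')) / v (x (ptTranslate g q')) = c) := by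
  classical
  have main : ∀ a : A, a ≠ 0 → ∃ h : A, h ≠ 0 ∧ ∃ r : NNReal, 0 < r ∧
      ∀ g : A →ₐ[k] k, g h ≠ 0 → v (x (ptTranslate g a)) = r := by
    intro a ha
    obtain ⟨h, hh, r, hr, hmain⟩ :=
      key_lemma hfg v hmul hadd hzero htriv _ (alpha_ne_zero x ha)
    exact ⟨h, hh, r, hr, fun g hg => by rw [x_ptTranslate]; exact hmain g hg⟩
  have hvmul : ∀ (g : A →ₐ[k] k) (a b : A),
      v (x (ptTranslate g (a * b))) = v (x (ptTranslate g a)) * v (x (ptTranslate g b)) := by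
    intro g a b
    rw [ptTranslate_mul, map_mul, hmul]
  have hvne : ∀ (g : A →ₐ[k] k) (a : A) (r : NNReal), 0 < r →
      v (x (ptTranslate g a)) = r → x (ptTranslate g a) ≠ 0 := by
    intro g a r hr hv hcon
    rw [hcon, (hzero 0).mpr rfl] at hv
    exact (lt_irrefl _ (hv ▸ hr)).elim
  obtain ⟨hP, hPne, rP, hrP, hPmain⟩ := main p hp
  obtain ⟨hQ, hQne, rQ, hrQ, hQmain⟩ := main q hq
  refine ⟨hP * hQ, mul_ne_zero hPne hQne, exists_point hfg _ (mul_ne_zero hPne hQne),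
    rP / rQ, ?_, ?_⟩
  · intro g hg
    rw [map_mul] at hg
    obtain ⟨hg1, hg2⟩ := mul_ne_zero_iff.mp hg
    refine ⟨hvne g q rQ hrQ (hQmain g hg2), ?_⟩
    rw [hPmain g hg1, hQmain g hg2]
  · intro p' q' hq' heq
    have hp' : p' ≠ 0 := by
      intro hc
      rw [hc, zero_mul] at heq
      rcases mul_eq_zero.mp heq with h1 | h1
      · exact hp h1
      · exact hq' h1
    obtain ⟨hP', hP'ne, rP', hrP', hP'main⟩ := main p' hp'
    obtain ⟨hQ', hQ'ne, rQ', hrQ', hQ'main⟩ := main q' hq'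
    -- the cross ratio identity
    obtain ⟨g₁, hg₁⟩ := exists_point hfg (hP * hQ * (hP' * hQ'))
      (mul_ne_zero (mul_ne_zero hPne hQne) (mul_ne_zero hP'ne hQ'ne))
    rw [map_mul, map_mul, map_mul] at hg₁
    obtain ⟨⟨hg₁P, hg₁Q⟩, hg₁P', hg₁Q'⟩ :=
      And.imp mul_ne_zero_iff.mp mul_ne_zero_iff.mp (mul_ne_zero_iff.mp hg₁)
    have cross : rP * rQ' = rP' * rQ := by
      have h1 := hvmul g₁ p q'
      have h2 := hvmul g₁ p' q
      rw [heq, h2, hP'main g₁ hg₁P', hQmain g₁ hg₁Q] at h1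
      rw [hPmain g₁ hg₁P, hQ'main g₁ hg₁Q'] at h1
      exact h1.symm
    have hcc : rP' / rQ' = rP / rQ := by
      rw [div_eq_div_iff hrQ'.ne' hrQ.ne']
      exact cross.symm
    refine ⟨hP' * hQ', mul_ne_zero hP'ne hQ'ne,
      exists_point hfg _ (mul_ne_zero hP'ne hQ'ne), fun g hg => ?_⟩
    rw [map_mul] at hg
    obtain ⟨hg1, hg2⟩ := mul_ne_zero_iff.mp hg
    refine ⟨hvne g q' rQ' hrQ' (hQ'main g hg2), ?_⟩
    rw [hP'main g hg1, hQ'main g hg2, hcc]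
end

section
/- Let f ∈ A and suppose the element (id_A ⊗ x)(Δ f) of A ⊗_k L is written as Σ_{i=1}^r g_i ⊗ c_i with g₁, …, g_r ∈ A linearly independent over k and c₁, …, c_r ∈ L. Then ‖f‖_x = max_{1 ≤ i ≤ r} ‖c_i‖. -/
open TensorProduct

/-- `‖f‖ₓ := sup { ‖x(g • f)‖ : g : A →ₐ[k] k }`. -/
noncomputable def normx {k A L : Type*} [CommSemiring k] [Semiring A]
    [Bialgebra k A] [CommSemiring L] [Algebra k L]
    (v : L → NNReal) (x : A →ₐ[k] L) (f : A) : NNReal :=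
  ⨆ g : A →ₐ[k] k, v (x (ptTranslate g f))

/-- Points separate elements of a f.g. domain over an algebraically closed field. -/
lemma exists_point_ne_zero {k A : Type*} [Field k] [IsAlgClosed k] [CommRing A] [IsDomain A]
    [Algebra k A] (hfg : Algebra.FiniteType k A) (a : A) (ha : a ≠ 0) :
    ∃ g : A →ₐ[k] k, g a ≠ 0 := by
  have : IsJacobsonRing A := isJacobsonRing_of_finiteType (A := k)
  have hjac : (⊥ : Ideal A).jacobson = ⊥ :=
    isJacobsonRing_iff_prime_eq.mp this ⊥ Ideal.bot_prime
  obtain ⟨m, hm, ham⟩ : ∃ m : Ideal A, (⊥ ≤ m ∧ m.IsMaximal) ∧ a ∉ m := by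
    by_contra h
    push_neg at h
    have : a ∈ (⊥ : Ideal A).jacobson := Ideal.mem_sInf.mpr fun {J} hJ => h J hJ
    rw [hjac] at this
    exact ha this
  haveI : m.IsMaximal := hm.2
  letI : Field (A ⧸ m) := Ideal.Quotient.field m
  haveI hft : Algebra.FiniteType k (A ⧸ m) :=
    (by haveI := hfg; exact Algebra.FiniteType.of_surjective (Ideal.Quotient.mkₐ k m) (Ideal.Quotient.mkₐ_surjective k m))
  haveI : Module.Finite k (A ⧸ m) := finite_of_finite_type_of_isJacobsonRing k (A ⧸ m)
  haveI : Algebra.IsIntegral k (A ⧸ m) := Algebra.IsIntegral.of_finite k (A ⧸ m)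
  have hsurj : Function.Surjective (algebraMap k (A ⧸ m)) :=
    IsAlgClosed.algebraMap_bijective_of_isIntegral.2
  have hbij : Function.Bijective (Algebra.ofId k (A ⧸ m)) :=
    ⟨fun u w huw => (algebraMap k (A ⧸ m)).injective huw, hsurj⟩
  let e : k ≃ₐ[k] (A ⧸ m) := AlgEquiv.ofBijective (Algebra.ofId k (A ⧸ m)) hbij
  refine ⟨(e.symm : (A ⧸ m) →ₐ[k] k).comp (Ideal.Quotient.mkₐ k m), ?_⟩
  simp only [AlgHom.coe_comp, Function.comp_apply, Ideal.Quotient.mkₐ_eq_mk]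
  intro h0
  have : (Ideal.Quotient.mk m) a = 0 := by
    have := congrArg e h0
    simpa using this
  exact ham (Ideal.Quotient.eq_zero_iff_mem.mp this)

/-- Ultrametric bound for finite sums. -/
lemma v_sum_le {L : Type*} [AddCommMonoid L] (v : L → NNReal) (h0 : v 0 = 0)
    (hadd : ∀ a b : L, v (a + b) ≤ max (v a) (v b)) {ι : Type*} (s : Finset ι) (t : ι → L) :
    v (∑ i ∈ s, t i) ≤ s.sup fun i => v (t i) := by
  classical
  induction s using Finset.cons_induction with
  | empty => simp [h0]
  | cons a s ha ih =>
    rw [Finset.sum_cons, Finset.sup_cons]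
    exact le_trans (hadd _ _) (sup_le_sup le_rfl ih)

/-- Given linearly independent `gs`, there exist points `p j` such that the evaluation
matrix `(p j (gs i))` is invertible. -/
lemma exists_unit_eval_matrix {k A : Type*} [Field k] [IsAlgClosed k] [CommRing A] [IsDomain A]
    [Algebra k A] (hfg : Algebra.FiniteType k A) {r : ℕ} {gs : Fin r → A}
    (hli : LinearIndependent k gs) :
    ∃ p : Fin r → (A →ₐ[k] k),
      IsUnit (Matrix.of fun j i => p j (gs i) : Matrix (Fin r) (Fin r) k) := by
  classical
  set S : Set (Fin r → k) := Set.range (fun g : A →ₐ[k] k => fun i => g (gs i)) with hS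
  have hspan : Submodule.span k S = ⊤ := by
    by_contra h
    obtain ⟨φ, hφ0, hφ⟩ := Submodule.exists_dual_map_eq_bot_of_lt_top
      (lt_top_iff_ne_top.mpr h) inferInstance
    set c : Fin r → k := fun i => φ (fun j => if i = j then 1 else 0) with hc
    have hφy : ∀ y : Fin r → k, φ y = ∑ i, y i * c i := by
      intro y
      rw [LinearMap.pi_apply_eq_sum_univ]
      simp [smul_eq_mul, hc]
    have hcne : c ≠ 0 := by
      intro hc0
      apply hφ0
      apply LinearMap.ext
      intro y
      rw [hφy y]
      simp [hc0]
    have hane : (∑ i, c i • gs i) ≠ 0 := by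
      intro h0
      apply hcne
      funext i
      exact (Fintype.linearIndependent_iff.mp hli) c h0 i
    obtain ⟨g, hg⟩ := exists_point_ne_zero hfg _ hane
    have hmem : (fun i => g (gs i)) ∈ Submodule.span k S :=
      Submodule.subset_span ⟨g, rfl⟩
    have hzero : φ (fun i => g (gs i)) = 0 := by
      have : φ (fun i => g (gs i)) ∈ Submodule.map φ (Submodule.span k S) :=
        Submodule.mem_map_of_mem hmem
      rw [hφ] at this
      exact (Submodule.mem_bot k).mp this
    apply hg
    have : ∑ i, g (gs i) * c i = 0 := by rw [← hφy]; exact hzero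
    calc g (∑ i, c i • gs i) = ∑ i, g (gs i) * c i := by
          rw [map_sum]
          exact Finset.sum_congr rfl fun i _ => by
            rw [map_smul, smul_eq_mul, mul_comm]
      _ = 0 := this
  obtain ⟨b, hbS, hbspan, hbli⟩ := exists_linearIndependent k S
  rw [hspan] at hbspan
  let B : Module.Basis b k (Fin r → k) := Module.Basis.mk hbli (by rw [Subtype.range_coe, hbspan])
  haveI : Fintype b := FiniteDimensional.fintypeBasisIndex B
  have hcard : Fintype.card b = r := by
    have h1 := Module.finrank_eq_card_basis B
    have h2 : Module.finrank k (Fin r → k) = r := by simp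
    omega
  let e : Fin r ≃ b := (Fintype.equivFinOfCardEq hcard).symm
  have hchoice : ∀ j : Fin r, ∃ g : A →ₐ[k] k, (fun i => g (gs i)) = (e j : Fin r → k) :=
    fun j => hbS (e j).2
  choose p hp using hchoice
  refine ⟨p, ?_⟩
  rw [← Matrix.linearIndependent_rows_iff_isUnit]
  have : (fun j => (Matrix.of fun j i => p j (gs i) : Matrix (Fin r) (Fin r) k) j)
      = fun j => ((e j : Fin r → k)) := by
    funext j
    exact hp j
  show LinearIndependent k (fun j => (Matrix.of fun j i => p j (gs i) : Matrix (Fin r) (Fin r) k) j)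
  rw [this]
  exact hbli.comp e (Equiv.injective e)

/-- Evaluation of a translate in terms of a tensor representation of `Δ f`. -/
lemma eval_ptTranslate {k A L : Type*} [CommSemiring k] [Semiring A]
    [Bialgebra k A] [CommSemiring L] [Algebra k L]
    (x : A →ₐ[k] L) (g : A →ₐ[k] k) (f : A) {r : ℕ} (gs : Fin r → A) (cs : Fin r → L)
    (hrep : (TensorProduct.map (LinearMap.id : A →ₗ[k] A) x.toLinearMap)
        (Coalgebra.comul (R := k) f) = ∑ i, gs i ⊗ₜ[k] cs i) :
    x (ptTranslate g f) = ∑ i, g (gs i) • cs i := by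
  have key : (x.toLinearMap ∘ₗ (TensorProduct.lid k A).toLinearMap
        ∘ₗ TensorProduct.map g.toLinearMap (LinearMap.id : A →ₗ[k] A))
      = ((TensorProduct.lid k L).toLinearMap
        ∘ₗ TensorProduct.map g.toLinearMap (LinearMap.id : L →ₗ[k] L)
        ∘ₗ TensorProduct.map (LinearMap.id : A →ₗ[k] A) x.toLinearMap) := by
    apply TensorProduct.ext'
    intro a bb
    simp [TensorProduct.lid_tmul]
  have happ := congrArg (fun φ : (A ⊗[k] A) →ₗ[k] L => φ (Coalgebra.comul (R := k) f)) key
  simp only [LinearMap.comp_apply, LinearEquiv.coe_coe, AlgHom.toLinearMap_apply] at happ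
  have : x (ptTranslate g f)
      = (TensorProduct.lid k L) ((TensorProduct.map g.toLinearMap (LinearMap.id : L →ₗ[k] L))
          ((TensorProduct.map (LinearMap.id : A →ₗ[k] A) x.toLinearMap)
            (Coalgebra.comul (R := k) f))) := by
    rw [ptTranslate]
    exact happ
  rw [this, hrep, map_sum, map_sum]
  simp [TensorProduct.lid_tmul]

/-- If `(id ⊗ x)(Δ f) = ∑ i, gᵢ ⊗ cᵢ` with the `gᵢ` linearly independent over `k`,
then `‖f‖ₓ = max_i ‖cᵢ‖`. -/
theorem statement4
    {k A L : Type*} [Field k] [IsAlgClosed k]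
    [CommRing A] [IsDomain A] [HopfAlgebra k A]
    (hfg : Algebra.FiniteType k A)
    [Field L] [Algebra k L]
    (v : L → NNReal)
    (hmul : ∀ a b : L, v (a * b) = v a * v b)
    (hadd : ∀ a b : L, v (a + b) ≤ max (v a) (v b))
    (hzero : ∀ a : L, v a = 0 ↔ a = 0)
    (htriv : ∀ c : k, c ≠ 0 → v (algebraMap k L c) = 1)
    (x : A →ₐ[k] L) (f : A)
    (r : ℕ) (gs : Fin r → A) (cs : Fin r → L)
    (hli : LinearIndependent k gs)
    (hrep : (TensorProduct.map (LinearMap.id : A →ₗ[k] A) x.toLinearMap)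
        (Coalgebra.comul (R := k) f) = ∑ i, gs i ⊗ₜ[k] cs i) :
    normx v x f = Finset.univ.sup fun i => v (cs i) := by
  classical
  have h0 : v 0 = 0 := (hzero 0).mpr rfl
  have hsmul : ∀ (c : k) (l : L), v (c • l) ≤ v l := by
    intro c l
    rcases eq_or_ne c 0 with h | h
    · simp [h, h0]
    · rw [Algebra.smul_def, hmul, htriv c h, one_mul]
  have heval : ∀ g : A →ₐ[k] k, x (ptTranslate g f) = ∑ i, g (gs i) • cs i :=
    fun g => eval_ptTranslate x g f gs cs hrep
  have hub : ∀ g : A →ₐ[k] k, v (x (ptTranslate g f)) ≤ Finset.univ.sup fun i => v (cs i) := by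
    intro g
    rw [heval g]
    refine le_trans (v_sum_le v h0 hadd _ _) (Finset.sup_le fun i hi => ?_)
    exact le_trans (hsmul _ _) (Finset.le_sup (f := fun i => v (cs i)) hi)
  haveI hne : Nonempty (A →ₐ[k] k) := ⟨Bialgebra.counitAlgHom k A⟩
  have hbdd : BddAbove (Set.range fun g : A →ₐ[k] k => v (x (ptTranslate g f))) :=
    ⟨_, mem_upperBounds.mpr (by rintro y ⟨g, rfl⟩; exact hub g)⟩
  apply le_antisymm
  · exact ciSup_le hub
  · obtain ⟨p, hM⟩ := exists_unit_eval_matrix hfg hli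
    set M : Matrix (Fin r) (Fin r) k := Matrix.of fun j i => p j (gs i) with hMdef
    have h1 : M⁻¹ * M = 1 := Matrix.nonsing_inv_mul M ((Matrix.isUnit_iff_isUnit_det M).mp hM)
    have hcs : ∀ i, cs i = ∑ j, (M⁻¹ i j) • x (ptTranslate (p j) f) := by
      intro i
      symm
      calc ∑ j, (M⁻¹ i j) • x (ptTranslate (p j) f)
          = ∑ j, ∑ i', (M⁻¹ i j * M j i') • cs i' := by
            refine Finset.sum_congr rfl fun j _ => ?_
            rw [heval (p j), Finset.smul_sum]
            exact Finset.sum_congr rfl fun i' _ => by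
              rw [smul_smul]; rfl
        _ = ∑ i', ((M⁻¹ * M) i i') • cs i' := by
            rw [Finset.sum_comm]
            exact Finset.sum_congr rfl fun i' _ => by
              rw [← Finset.sum_smul, Matrix.mul_apply]
        _ = cs i := by
            rw [h1]
            simp [Matrix.one_apply]
    refine Finset.sup_le fun i _ => ?_
    calc v (cs i) ≤ Finset.univ.sup fun j => v (x (ptTranslate (p j) f)) := by
          rw [hcs i]
          refine le_trans (v_sum_le v h0 hadd _ _) (Finset.sup_le fun j hj => ?_)
          exact le_trans (hsmul _ _) (Finset.le_sup (f := fun j => v (x (ptTranslate (p j) f))) hj)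
      _ ≤ normx v x f := Finset.sup_le fun j _ => le_ciSup hbdd (p j)
end

section
/- For every f ∈ A, ‖f‖_x equals the infimum, over all finite representations (id_A ⊗ x)(Δ f) = Σ_i g_i ⊗ c_i in A ⊗_k L (with g_i ∈ A, c_i ∈ L), of max_i δ(g_i)·‖c_i‖, where δ : A → ℝ≥0 is the trivial norm on A given by δ(a) = 1 if a ≠ 0 and δ(0) = 0. (This identifies ‖·‖_x with the restriction to A of the completed tensor-product seminorm of the trivial norm on A and the valuation on L.) -/
open TensorProduct

open scoped Classical in
/-- The trivial norm on `A`: `δ(a) = 1` if `a ≠ 0` and `δ(0) = 0`. -/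
noncomputable def trivNorm {A : Type*} [Zero A] (a : A) : NNReal :=
  if a = 0 then 0 else 1

/-- Points of a finitely generated domain over an algebraically closed field
separate elements. -/
theorem aux_sep {k A : Type*} [Field k] [IsAlgClosed k] [CommRing A] [IsDomain A] [Algebra k A]
    (hfg : Algebra.FiniteType k A) (f : A) (hf : f ≠ 0) : ∃ g : A →ₐ[k] k, g f ≠ 0 := by
  haveI : Algebra.FiniteType k A := hfg
  haveI : IsJacobsonRing A := isJacobsonRing_of_finiteType (A := k)
  have h0 : (⊥ : Ideal A).jacobson = ⊥ := by
    rw [← Ideal.radical_eq_jacobson, Ideal.radical_bot_of_noZeroDivisors]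
  have hf' : f ∉ (⊥ : Ideal A).jacobson := by rw [h0]; simpa using hf
  unfold Ideal.jacobson at hf'
  rw [Ideal.mem_sInf] at hf'
  push_neg at hf'
  obtain ⟨m, ⟨-, hm⟩, hfm⟩ := hf'
  haveI : m.IsMaximal := hm
  letI fld : Field (A ⧸ m) := Ideal.Quotient.field m
  haveI : Algebra.FiniteType k (A ⧸ m) := Algebra.FiniteType.trans hfg inferInstance
  haveI hfin : Module.Finite k (A ⧸ m) :=
    @finite_of_finite_type_of_isJacobsonRing k (A ⧸ m) _ fld _ _ _
  haveI : Algebra.IsIntegral k (A ⧸ m) := Algebra.IsIntegral.of_finite k (A ⧸ m)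
  have hsurj : Function.Bijective (algebraMap k (A ⧸ m)) :=
    ⟨(algebraMap k (A ⧸ m)).injective, IsAlgClosed.algebraMap_bijective_of_isIntegral.2⟩
  let e : k ≃ₐ[k] (A ⧸ m) := AlgEquiv.ofBijective (Algebra.ofId k (A ⧸ m)) hsurj
  refine ⟨(e.symm.toAlgHom.comp (Ideal.Quotient.mkₐ k m)), ?_⟩
  simp only [AlgHom.comp_apply]
  intro h
  apply hfm
  have : Ideal.Quotient.mkₐ k m f = 0 := by
    have := congrArg e h
    simpa using this
  rwa [← Ideal.Quotient.eq_zero_iff_mem]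

/-- Evaluating `x (g • f)` through any representation of `(id ⊗ x)(Δ f)`. -/
theorem aux_eval_rep {k A L : Type*} [CommSemiring k] [Semiring A] [Bialgebra k A]
    [CommSemiring L] [Algebra k L] (x : A →ₐ[k] L) (g : A →ₐ[k] k) (f : A)
    {r : ℕ} (gs : Fin r → A) (cs : Fin r → L)
    (h : (TensorProduct.map (LinearMap.id : A →ₗ[k] A) x.toLinearMap)
            (Coalgebra.comul (R := k) f) = ∑ i, gs i ⊗ₜ[k] cs i) :
    x (ptTranslate g f) = ∑ i, algebraMap k L (g (gs i)) * cs i := by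
  let Φ : A ⊗[k] L →ₗ[k] L :=
    (TensorProduct.lid k L).toLinearMap ∘ₗ
      TensorProduct.map g.toLinearMap (LinearMap.id : L →ₗ[k] L)
  have key : ∀ t : A ⊗[k] A,
      x ((TensorProduct.lid k A)
        ((TensorProduct.map g.toLinearMap (LinearMap.id : A →ₗ[k] A)) t)) =
      Φ ((TensorProduct.map (LinearMap.id : A →ₗ[k] A) x.toLinearMap) t) := by
    intro t
    induction t using TensorProduct.induction_on with
    | zero => simp [Φ]
    | tmul a b => simp [Φ, Algebra.smul_def]
    | add s t hs ht => simp [map_add, hs, ht]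
  rw [ptTranslate, key, h, map_sum]
  refine Finset.sum_congr rfl fun i _ => ?_
  simp [Φ, Algebra.smul_def]

/-- Every element of `A ⊗ L` has a representation with linearly independent
left-hand components. -/
theorem aux_exists_rep {k A L : Type*} [Field k] [AddCommGroup A] [Module k A]
    [AddCommGroup L] [Module k L] (t : A ⊗[k] L) :
    ∃ (r : ℕ) (gs : Fin r → A) (cs : Fin r → L),
      t = ∑ i, gs i ⊗ₜ[k] cs i ∧ LinearIndependent k gs := by
  classical
  let b : Module.Basis (Module.Basis.ofVectorSpaceIndex k A) k A := Module.Basis.ofVectorSpace k A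
  set ι := Module.Basis.ofVectorSpaceIndex k A
  let e : A ⊗[k] L ≃ₗ[k] (ι →₀ L) :=
    (TensorProduct.congr b.repr (LinearEquiv.refl k L)).trans
      (TensorProduct.finsuppScalarLeft k L ι)
  set c : ι →₀ L := e t with hc
  have hsymm : ∀ (j : ι) (v : L), e.symm (Finsupp.single j v) = b j ⊗ₜ[k] v := by
    intro j v
    simp only [e, LinearEquiv.trans_symm, LinearEquiv.trans_apply,
      TensorProduct.finsuppScalarLeft_symm_apply_single, TensorProduct.congr_symm_tmul]
    exact congrArg (· ⊗ₜ[k] v) (b.repr.symm_apply_apply (b j) ▸ (Module.Basis.repr_symm_single_one b j))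
  have ht : t = ∑ j ∈ c.support, b j ⊗ₜ[k] c j := by
    have : t = e.symm c := by simp [hc]
    rw [this]
    conv_lhs => rw [← Finsupp.sum_single c]
    rw [Finsupp.sum, map_sum]
    exact Finset.sum_congr rfl fun j _ => hsymm j (c j)
  let σ : Fin c.support.card → c.support := c.support.equivFin.symm
  refine ⟨c.support.card, fun i => b (σ i), fun i => c (σ i), ?_, ?_⟩
  · rw [ht, ← Finset.sum_coe_sort]
    exact (Fintype.sum_equiv c.support.equivFin.symm _ _ (fun i => rfl)).symm
  · exact b.linearIndependent.comp (fun i => (σ i : ι))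
      ((Subtype.val_injective).comp c.support.equivFin.symm.injective)

/-- Ultrametric bound for finite sums. -/
theorem aux_vsum {L ι : Type*} [AddCommMonoid L] (v : L → NNReal) (h0 : v 0 = 0)
    (hadd : ∀ a b : L, v (a + b) ≤ max (v a) (v b)) (s : Finset ι) (a : ι → L) :
    v (∑ i ∈ s, a i) ≤ s.sup fun i => v (a i) := by
  classical
  induction s using Finset.induction_on with
  | empty => simpa using h0.le
  | insert x s hx ih =>
    rw [Finset.sum_insert hx, Finset.sup_insert]
    exact le_trans (hadd _ _) (max_le_max le_rfl ih)

/-- `‖f‖ₓ` is the infimum, over all finite representations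
`(id ⊗ x)(Δ f) = ∑ i, gᵢ ⊗ cᵢ` in `A ⊗[k] L`, of `max_i δ(gᵢ)‖cᵢ‖`;
i.e. `‖·‖ₓ` is the restriction to `A` of the tensor-product seminorm of the trivial
norm on `A` and the valuation on `L`. -/
theorem statement5
    {k A L : Type*} [Field k] [IsAlgClosed k]
    [CommRing A] [IsDomain A] [HopfAlgebra k A]
    (hfg : Algebra.FiniteType k A)
    [Field L] [Algebra k L]
    (v : L → NNReal)
    (hmul : ∀ a b : L, v (a * b) = v a * v b)
    (hadd : ∀ a b : L, v (a + b) ≤ max (v a) (v b))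
    (hzero : ∀ a : L, v a = 0 ↔ a = 0)
    (htriv : ∀ c : k, c ≠ 0 → v (algebraMap k L c) = 1)
    (x : A →ₐ[k] L) (f : A) :
    normx v x f = sInf { M : NNReal |
      ∃ (r : ℕ) (gs : Fin r → A) (cs : Fin r → L),
        (TensorProduct.map (LinearMap.id : A →ₗ[k] A) x.toLinearMap)
            (Coalgebra.comul (R := k) f) = ∑ i, gs i ⊗ₜ[k] cs i ∧
        M = Finset.univ.sup fun i => trivNorm (gs i) * v (cs i) } := by
  classical
  have hv0 : v 0 = 0 := (hzero 0).2 rfl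
  have hvle1 : ∀ c : k, v (algebraMap k L c) ≤ 1 := by
    intro c
    by_cases hc : c = 0
    · simp [hc, hv0]
    · exact (htriv c hc).le
  -- a linearly independent representation
  obtain ⟨r₀, Gs, Cs, hrep₀, hli₀⟩ :=
    aux_exists_rep (k := k) ((TensorProduct.map (LinearMap.id : A →ₗ[k] A) x.toLinearMap)
      (Coalgebra.comul (R := k) f))
  -- the sup is bounded above
  have hbdd : BddAbove (Set.range fun g : A →ₐ[k] k => v (x (ptTranslate g f))) := by
    refine ⟨Finset.univ.sup fun i => v (Cs i), ?_⟩
    rintro - ⟨g, rfl⟩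
    show v (x (ptTranslate g f)) ≤ _
    rw [aux_eval_rep x g f Gs Cs hrep₀]
    refine le_trans (aux_vsum v hv0 hadd _ _) (Finset.sup_mono_fun fun i _ => ?_)
    rw [hmul]
    calc v (algebraMap k L (g (Gs i))) * v (Cs i) ≤ 1 * v (Cs i) :=
          mul_le_mul_left (hvle1 _) _
      _ = v (Cs i) := one_mul _
  -- key: each Cs i is a k-combination of translate values
  have hcs : ∀ i₀ : Fin r₀, ∃ (n : ℕ) (α : Fin n → k) (g : Fin n → (A →ₐ[k] k)),
      Cs i₀ = ∑ j, α j • x (ptTranslate (g j) f) := by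
    intro i₀
    set S : Set (Fin r₀ → k) := Set.range (fun g : A →ₐ[k] k => fun i => g (Gs i)) with hS
    have hspan : Submodule.span k S = ⊤ := by
      by_contra hne
      have hlt : Submodule.span k S < ⊤ := lt_top_iff_ne_top.mpr hne
      obtain ⟨φ, hφ0, hφ⟩ := Submodule.exists_dual_map_eq_bot_of_lt_top hlt inferInstance
      have hev : ∀ g : A →ₐ[k] k, φ (fun i => g (Gs i)) = 0 := by
        intro g
        have : φ (fun i => g (Gs i)) ∈ Submodule.map φ (Submodule.span k S) :=
          Submodule.mem_map_of_mem (Submodule.subset_span ⟨g, rfl⟩)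
        rw [hφ] at this
        exact (Submodule.mem_bot k).1 this
      set lam : Fin r₀ → k := fun i => φ (fun j => if i = j then 1 else 0) with hlam
      have hφw : ∀ w : Fin r₀ → k, φ w = ∑ i, w i * lam i := by
        intro w
        rw [LinearMap.pi_apply_eq_sum_univ φ w]
        simp [hlam, smul_eq_mul]
      have hz : (∑ i, lam i • Gs i) = 0 := by
        by_contra hnz
        obtain ⟨g, hg⟩ := aux_sep hfg _ hnz
        apply hg
        rw [map_sum]
        have : ∀ i, g (lam i • Gs i) = g (Gs i) * lam i := by
          intro i
          rw [map_smul, smul_eq_mul, mul_comm]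
        rw [Finset.sum_congr rfl fun i _ => this i, ← hφw, hev]
      have hlam0 : ∀ i, lam i = 0 := Fintype.linearIndependent_iff.mp hli₀ lam hz
      apply hφ0
      apply LinearMap.ext
      intro w
      rw [hφw w]
      simp [hlam0]
    have hmem : (Pi.single i₀ (1 : k) : Fin r₀ → k) ∈ Submodule.span k S := by
      rw [hspan]; trivial
    rw [Submodule.mem_span_set'] at hmem
    obtain ⟨n, α, w, hw⟩ := hmem
    choose g hg using fun j => (w j).2
    refine ⟨n, α, g, ?_⟩
    have key : ∀ i, (∑ j, α j * (g j) (Gs i)) = (Pi.single i₀ (1 : k) : Fin r₀ → k) i := by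
      intro i
      have h1 := congrFun hw i
      simp only [Finset.sum_apply, Pi.smul_apply, smul_eq_mul] at h1
      rw [← h1]
      refine Finset.sum_congr rfl fun j _ => ?_
      rw [← hg j]
    symm
    calc ∑ j, α j • x (ptTranslate (g j) f)
        = ∑ j, ∑ i, algebraMap k L (α j * (g j) (Gs i)) * Cs i := by
          refine Finset.sum_congr rfl fun j _ => ?_
          rw [aux_eval_rep x (g j) f Gs Cs hrep₀, Finset.smul_sum]
          refine Finset.sum_congr rfl fun i _ => ?_
          rw [Algebra.smul_def, map_mul, mul_assoc]
      _ = ∑ i, ∑ j, algebraMap k L (α j * (g j) (Gs i)) * Cs i := Finset.sum_comm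
      _ = ∑ i, algebraMap k L ((Pi.single i₀ (1 : k) : Fin r₀ → k) i) * Cs i := by
          refine Finset.sum_congr rfl fun i _ => ?_
          rw [← Finset.sum_mul, ← map_sum, key i]
      _ = Cs i₀ := by
          rw [Finset.sum_eq_single i₀]
          · simp
          · intro i _ hi
            simp [Pi.single_eq_of_ne hi]
          · simp
  refine le_antisymm ?_ ?_
  · -- normx ≤ sInf
    refine le_csInf ⟨_, r₀, Gs, Cs, hrep₀, rfl⟩ ?_
    rintro M ⟨r, gs, cs, hrep, rfl⟩
    haveI : Nonempty (A →ₐ[k] k) := ⟨Bialgebra.counitAlgHom k A⟩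
    refine ciSup_le fun g => ?_
    rw [aux_eval_rep x g f gs cs hrep]
    refine le_trans (aux_vsum v hv0 hadd _ _) (Finset.sup_mono_fun fun i _ => ?_)
    rw [hmul]
    by_cases hgi : gs i = 0
    · simp [hgi, map_zero, hv0]
    · rw [trivNorm, if_neg hgi]
      exact mul_le_mul_left (hvle1 _) _
  · -- sInf ≤ normx
    refine le_trans (csInf_le (OrderBot.bddBelow _) ⟨r₀, Gs, Cs, hrep₀, rfl⟩) ?_
    refine Finset.sup_le fun i _ => ?_
    have h1 : trivNorm (Gs i) * v (Cs i) ≤ v (Cs i) := by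
      rw [trivNorm]
      split
      · simp
      · rw [one_mul]
    refine le_trans h1 ?_
    obtain ⟨n, α, g, hci⟩ := hcs i
    rw [hci]
    refine le_trans (aux_vsum v hv0 hadd _ _) (Finset.sup_le fun j _ => ?_)
    rw [Algebra.smul_def, hmul]
    calc v (algebraMap k L (α j)) * v (x (ptTranslate (g j) f))
        ≤ 1 * v (x (ptTranslate (g j) f)) := mul_le_mul_left (hvle1 _) _
      _ = v (x (ptTranslate (g j) f)) := one_mul _
      _ ≤ normx v x f := le_ciSup hbdd (g j)
end

section
/- Let L be a field equipped with a non-Archimedean valuation ‖·‖ : L → ℝ≥0, and let k ⊆ L be a subfield on which the valuation is trivial (‖c‖ = 1 for all nonzero c ∈ k). Let V ⊆ L be a finite-dimensional k-linear subspace and let α > 1 be a real number. Then V admits a k-basis v₁, …, v_r such that for all scalars λ₁, …, λ_r ∈ k one has ‖Σ_j λ_j v_j‖ ≥ α⁻¹ · max_j ‖λ_j v_j‖. (Such a basis is called an α-Cartesian basis; this is the statement of BGR 2.6.2 Proposition 3 over a trivially valued ground field.) -/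
open Submodule Set Module

theorem aux6 {k L : Type*} [Field k] [Field L] [Algebra k L]
    (v : L → NNReal)
    (hmul : ∀ a b : L, v (a * b) = v a * v b)
    (hadd : ∀ a b : L, v (a + b) ≤ max (v a) (v b))
    (hzero : ∀ a : L, v a = 0 ↔ a = 0)
    (htriv : ∀ c : k, c ≠ 0 → v (algebraMap k L c) = 1) :
    ∀ n : ℕ, ∀ V : Submodule k L, FiniteDimensional k V → Module.finrank k V = n →
    ∀ α : NNReal, 1 < α →
    ∃ b : Fin n → L,
      (∀ j, b j ∈ V) ∧ LinearIndependent k b ∧ Submodule.span k (Set.range b) = V ∧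
      ∀ lam : Fin n → k,
        α⁻¹ * (Finset.univ.sup fun j => v (lam j • b j)) ≤ v (∑ j, lam j • b j) := by
  -- basic facts about v
  have hv0 : v 0 = 0 := (hzero 0).2 rfl
  have hvsmul : ∀ (c : k) (y : L), c ≠ 0 → v (c • y) = v y := by
    intro c y hc
    rw [Algebra.smul_def, hmul, htriv c hc, one_mul]
  have hvsmul_le : ∀ (c : k) (y : L), v (c • y) ≤ v y := by
    intro c y
    by_cases hc : c = 0
    · simp [hc, hv0]
    · exact (hvsmul c y hc).le
  have hvneg : ∀ a : L, v (-a) = v a := by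
    intro a
    have : (-a : L) = algebraMap k L (-1) * a := by simp
    rw [this, hmul, htriv (-1) (by norm_num), one_mul]
  have hvsub : ∀ a b : L, v (a - b) ≤ max (v a) (v b) := by
    intro a b
    have := hadd a (-b)
    rwa [hvneg b, ← sub_eq_add_neg] at this
  intro n
  induction n with
  | zero =>
    intro V _ hrank α hα
    refine ⟨Fin.elim0, fun j => j.elim0, linearIndependent_empty_type, ?_, ?_⟩
    · rw [Set.range_eq_empty, Submodule.span_empty, eq_comm, ← Submodule.finrank_eq_zero]
      exact hrank
    · intro lam
      simp [hv0]
  | succ n ih =>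
    intro V hVfd hrank α hα
    set β := NNReal.sqrt α with hβdef
    have hββ : β * β = α := NNReal.mul_self_sqrt α
    have hβ1 : 1 < β := by
      by_contra h
      push_neg at h
      have : α ≤ 1 := by
        calc α = β * β := hββ.symm
        _ ≤ 1 * 1 := mul_le_mul' h h
        _ = 1 := one_mul 1
      exact absurd hα (not_lt_of_ge this)
    have hβ1' : (1 : NNReal) ≤ β := hβ1.le
    have hβα : β ≤ α := by
      calc β = β * 1 := (mul_one β).symm
      _ ≤ β * β := mul_le_mul_right hβ1' β
      _ = α := hββ
    -- basis of V, split off last vector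
    let B : Basis (Fin (n + 1)) k V := Module.finBasisOfFinrankEq k V hrank
    let f : Fin (n + 1) → L := fun i => (B i : L)
    have hf : LinearIndependent k f :=
      (B.linearIndependent.map' V.subtype V.ker_subtype)
    have hfspan : Submodule.span k (Set.range f) = V := by
      have : Set.range f = V.subtype '' Set.range B := by
        rw [← Set.range_comp]; rfl
      rw [this, ← Submodule.map_span, B.span_eq, Submodule.map_top, Submodule.range_subtype]
    have hfV : ∀ j, f j ∈ V := fun j => (B j).2
    set e : Fin n → L := Fin.init f with he_def
    set x : L := f (Fin.last n) with hx_def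
    have hsnoc : Fin.snoc e x = f := Fin.snoc_init_self f
    have hf' : LinearIndependent k (Fin.snoc e x : Fin (n+1) → L) := by rw [hsnoc]; exact hf
    obtain ⟨he, hxU⟩ := linearIndependent_fin_snoc.mp hf'
    set U : Submodule k L := Submodule.span k (Set.range e) with hU_def
    have hUV : U ≤ V := by
      rw [hU_def, Submodule.span_le]
      rintro _ ⟨i, rfl⟩
      exact hfV _
    have hxV : x ∈ V := hfV _
    haveI hUfd : FiniteDimensional k U := FiniteDimensional.span_of_finite k (Set.finite_range e)
    have hUrank : Module.finrank k U = n := by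
      rw [hU_def, finrank_span_eq_card he, Fintype.card_fin]
    obtain ⟨u, huU, hu_ind, hu_span, hu_cart⟩ := ih U hUfd hUrank β hβ1
    -- lower bound on norms of nonzero elements of U
    have hc : ∃ c : NNReal, 0 < c ∧ ∀ y ∈ U, y ≠ 0 → c ≤ v y := by
      rcases Nat.eq_zero_or_pos n with hn | hn
      · refine ⟨1, one_pos, fun y hy hy0 => absurd ?_ hy0⟩
        subst hn
        rw [← hu_span] at hy
        simpa [Set.range_eq_empty] using hy
      · have hne : (Finset.univ : Finset (Fin n)).Nonempty := by
          simpa [Finset.univ_nonempty_iff] using Fin.pos_iff_nonempty.mp hn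
        refine ⟨β⁻¹ * Finset.univ.inf' hne fun i => v (u i), ?_, ?_⟩
        · refine mul_pos (inv_pos.mpr (zero_lt_one.trans hβ1)) ?_
          refine (Finset.lt_inf'_iff hne).mpr fun i _ => ?_
          exact pos_iff_ne_zero.mpr fun h0 => hu_ind.ne_zero i ((hzero (u i)).mp h0)
        · intro y hy hy0
          rw [← hu_span] at hy
          obtain ⟨lam, hlam⟩ := (mem_span_range_iff_exists_fun k).mp hy
          have : ∃ i, lam i ≠ 0 := by
            by_contra h
            push_neg at h
            apply hy0
            rw [← hlam]
            simp [h]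
          obtain ⟨i0, hi0⟩ := this
          calc β⁻¹ * Finset.univ.inf' hne (fun i => v (u i))
              ≤ β⁻¹ * v (lam i0 • u i0) := by
                rw [hvsmul _ _ hi0]
                exact mul_le_mul_right (Finset.inf'_le _ (Finset.mem_univ i0)) _
            _ ≤ β⁻¹ * (Finset.univ.sup fun i => v (lam i • u i)) :=
                mul_le_mul_right
                  (Finset.le_sup (f := fun i => v (lam i • u i)) (Finset.mem_univ i0)) _
            _ ≤ v (∑ i, lam i • u i) := hu_cart lam
            _ = v y := by rw [hlam]
    obtain ⟨c, hc0, hcU⟩ := hc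
    -- near-optimal approximation of x by elements of U
    have hP : ∃ t ∈ U, ∀ y ∈ U, v (x - t) ≤ β * v (x - y) := by
      by_cases h : ∃ y₀ ∈ U, v (x - y₀) < c
      · obtain ⟨y₀, hy₀U, hy₀⟩ := h
        refine ⟨y₀, hy₀U, fun y hy => ?_⟩
        by_cases hyy : y = y₀
        · subst hyy
          exact le_mul_of_one_le_left zero_le hβ1'
        · have hsub : y₀ - y ≠ 0 := sub_ne_zero.mpr (Ne.symm hyy)
          have h1 : c ≤ v (y₀ - y) := hcU _ (Submodule.sub_mem U hy₀U hy) hsub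
          have h2 : v (y₀ - y) ≤ max (v (x - y)) (v (x - y₀)) := by
            have : y₀ - y = (x - y) - (x - y₀) := by ring
            rw [this]
            exact hvsub _ _
          have h3 : c ≤ v (x - y) := by
            rcases max_cases (v (x - y)) (v (x - y₀)) with ⟨hm, _⟩ | ⟨hm, _⟩
            · rw [hm] at h2; exact h1.trans h2
            · rw [hm] at h2; exact absurd (h1.trans h2) (not_le_of_gt hy₀)
          calc v (x - y₀) ≤ c := hy₀.le
            _ ≤ v (x - y) := h3
            _ ≤ β * v (x - y) := le_mul_of_one_le_left zero_le hβ1'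
      · push_neg at h
        set S : Set NNReal := (fun y => v (x - y)) '' U with hS_def
        have hSne : S.Nonempty := ⟨v (x - 0), ⟨0, Submodule.zero_mem U, rfl⟩⟩
        have hd_lb : c ≤ sInf S := le_csInf hSne (by rintro _ ⟨y, hy, rfl⟩; exact h y hy)
        have hd_pos : 0 < sInf S := lt_of_lt_of_le hc0 hd_lb
        have hlt : sInf S < β * sInf S := by
          nth_rewrite 1 [← one_mul (sInf S)]
          exact mul_lt_mul_of_pos_right hβ1 hd_pos
        obtain ⟨a, ⟨t, htU, rfl⟩, hta⟩ := exists_lt_of_csInf_lt hSne hlt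
        refine ⟨t, htU, fun y hy => ?_⟩
        have : sInf S ≤ v (x - y) := csInf_le (OrderBot.bddBelow S) ⟨y, hy, rfl⟩
        exact hta.le.trans (mul_le_mul_right this β)
    obtain ⟨t, htU, hPt⟩ := hP
    set w : L := x - t with hw_def
    have hwU : w ∉ U := fun hw => hxU (by
      have : x = w + t := by rw [hw_def]; ring
      rw [hU_def] at *
      rw [this]
      exact Submodule.add_mem _ hw htU)
    set b' : Fin (n + 1) → L := Fin.snoc u w with hb'_def
    have hb'V : ∀ j, b' j ∈ V := by
      intro j
      refine Fin.lastCases ?_ ?_ j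
      · rw [hb'_def]; simp only [Fin.snoc_last]
        exact Submodule.sub_mem V hxV (hUV htU)
      · intro i
        rw [hb'_def]; simp only [Fin.snoc_castSucc]
        exact hUV (hu_span ▸ Submodule.subset_span (Set.mem_range_self i))
    have hb'_ind : LinearIndependent k b' :=
      linearIndependent_fin_snoc.mpr ⟨hu_ind, fun hw => hwU (hu_span ▸ hw)⟩
    have hb'_span : Submodule.span k (Set.range b') = V := by
      apply le_antisymm
      · rw [Submodule.span_le]
        rintro _ ⟨j, rfl⟩
        exact hb'V j
      · rw [← hfspan, Submodule.span_le]
        rintro _ ⟨j, rfl⟩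
        refine Fin.lastCases ?_ ?_ j
        · have hxw : f (Fin.last n) = w + t := by rw [hw_def, ← hx_def]; ring
          rw [hxw]
          refine Submodule.add_mem _ ?_ ?_
          · exact Submodule.subset_span ⟨Fin.last n, by rw [hb'_def]; simp⟩
          · have : U ≤ Submodule.span k (Set.range b') := by
              rw [← hu_span, Submodule.span_le]
              rintro _ ⟨i, rfl⟩
              exact Submodule.subset_span ⟨i.castSucc, by rw [hb'_def]; simp⟩
            exact this htU
        · intro i
          have hfe : f i.castSucc = e i := rfl
          rw [hfe]
          have : U ≤ Submodule.span k (Set.range b') := by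
            rw [← hu_span, Submodule.span_le]
            rintro _ ⟨i', rfl⟩
            exact Submodule.subset_span ⟨i'.castSucc, by rw [hb'_def]; simp⟩
          exact this (hU_def ▸ Submodule.subset_span (Set.mem_range_self i))
      -- cartesian estimate
    refine ⟨b', hb'V, hb'_ind, hb'_span, ?_⟩
    intro lam
    set μ : k := lam (Fin.last n) with hμ_def
    set T : L := ∑ i : Fin n, lam i.castSucc • u i with hT_def
    have hTU : T ∈ U := Submodule.sum_mem U fun i _ =>
      Submodule.smul_mem U _ (hu_span ▸ Submodule.subset_span (Set.mem_range_self i))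
    have hsum : ∑ j, lam j • b' j = T + μ • w := by
      rw [Fin.sum_univ_castSucc]
      congr 1
      · rw [hT_def]
        refine Finset.sum_congr rfl fun i _ => ?_
        rw [hb'_def]; simp
      · rw [hb'_def, hμ_def]; simp
    rw [hsum]
    have hα0 : (0:NNReal) < α := lt_trans zero_lt_one hα
    have hβ0 : (0:NNReal) < β := lt_trans zero_lt_one hβ1
    rw [inv_mul_le_iff₀ hα0]
    have hsupU : (Finset.univ.sup fun i : Fin n => v (lam i.castSucc • u i)) ≤ β * v T := by
      have h : β⁻¹ * (Finset.univ.sup fun i : Fin n => v (lam i.castSucc • u i)) ≤ v T :=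
        hu_cart fun i => lam i.castSucc
      exact (inv_mul_le_iff₀ hβ0).mp h
    by_cases hμ : μ = 0
    · rw [hμ, zero_smul, add_zero]
      apply Finset.sup_le
      intro j _
      refine Fin.lastCases ?_ (fun i => ?_) j
      · have hlam0 : lam (Fin.last n) = 0 := hμ_def.symm.trans hμ
        rw [hlam0, zero_smul, hv0]
        exact zero_le
      · calc v (lam i.castSucc • b' i.castSucc) = v (lam i.castSucc • u i) := by
              rw [hb'_def, Fin.snoc_castSucc]
          _ ≤ Finset.univ.sup fun i : Fin n => v (lam i.castSucc • u i) :=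
              Finset.le_sup (f := fun i : Fin n => v (lam i.castSucc • u i)) (Finset.mem_univ i)
          _ ≤ β * v T := hsupU
          _ ≤ α * v T := mul_le_mul_left hβα _
    · have hy0U : t - μ⁻¹ • T ∈ U := Submodule.sub_mem U htU (Submodule.smul_mem U _ hTU)
      have hSeq : T + μ • w = μ • (x - (t - μ⁻¹ • T)) := by
        rw [hw_def]
        simp only [smul_sub, smul_inv_smul₀ hμ]
        abel
      have hvS : v (T + μ • w) = v (x - (t - μ⁻¹ • T)) := by rw [hSeq, hvsmul _ _ hμ]
      have hwle : v w ≤ β * v (T + μ • w) := by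
        rw [hvS]
        exact hPt _ hy0U
      have hTle : v T ≤ β * v (T + μ • w) := by
        have h1 : v T ≤ max (v (T + μ • w)) (v (μ • w)) := by
          have h2 := hvsub (T + μ • w) (μ • w)
          simpa using h2
        refine h1.trans (max_le ?_ ?_)
        · exact le_mul_of_one_le_left zero_le hβ1'
        · rw [hvsmul _ _ hμ]
          exact hwle
      apply Finset.sup_le
      intro j _
      refine Fin.lastCases ?_ (fun i => ?_) j
      · calc v (lam (Fin.last n) • b' (Fin.last n)) = v w := by
              rw [hb'_def, Fin.snoc_last, ← hμ_def, hvsmul _ _ hμ]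
          _ ≤ β * v (T + μ • w) := hwle
          _ ≤ α * v (T + μ • w) := mul_le_mul_left hβα _
      · calc v (lam i.castSucc • b' i.castSucc) = v (lam i.castSucc • u i) := by
              rw [hb'_def, Fin.snoc_castSucc]
          _ ≤ Finset.univ.sup fun i : Fin n => v (lam i.castSucc • u i) :=
              Finset.le_sup (f := fun i : Fin n => v (lam i.castSucc • u i)) (Finset.mem_univ i)
          _ ≤ β * v T := hsupU
          _ ≤ β * (β * v (T + μ • w)) := mul_le_mul_right hTle _
          _ = α * v (T + μ • w) := by rw [← mul_assoc, hββ]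


/-- Existence of `α`-Cartesian bases (BGR 2.6.2 Proposition 3 over a trivially valued
ground field): any finite-dimensional `k`-subspace `V` of a non-Archimedean valued field
`L` whose valuation is trivial on the subfield `k` admits, for each `α > 1`, a `k`-basis
`v₁, …, v_r` with `‖∑ λⱼ vⱼ‖ ≥ α⁻¹ · max_j ‖λⱼ vⱼ‖`. -/
theorem statement6
    {k L : Type*} [Field k] [Field L] [Algebra k L]
    (v : L → NNReal)
    (hmul : ∀ a b : L, v (a * b) = v a * v b)
    (hadd : ∀ a b : L, v (a + b) ≤ max (v a) (v b))
    (hzero : ∀ a : L, v a = 0 ↔ a = 0)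
    (htriv : ∀ c : k, c ≠ 0 → v (algebraMap k L c) = 1)
    (V : Submodule k L) (hV : FiniteDimensional k V)
    (α : NNReal) (hα : 1 < α) :
    ∃ (r : ℕ) (b : Fin r → L),
      (∀ j, b j ∈ V) ∧ LinearIndependent k b ∧ Submodule.span k (Set.range b) = V ∧
      ∀ lam : Fin r → k,
        α⁻¹ * (Finset.univ.sup fun j => v (lam j • b j)) ≤ v (∑ j, lam j • b j) := by
  exact ⟨Module.finrank k V, aux6 v hmul hadd hzero htriv _ V hV rfl α hα⟩
end

section
/- For every f ∈ A, the k-linear span of the set of all translates { g•f : g a k-algebra homomorphism A → k } is a finite-dimensional k-vector space. -/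
open TensorProduct

/-- The `k`-span of all translates `g • f` of a fixed element `f` of a bialgebra `A`
by `k`-points `g : A →ₐ[k] k` is finite-dimensional. -/
theorem statement7
    {k A : Type*} [Field k] [Ring A] [Bialgebra k A] (f : A) :
    FiniteDimensional k
      (Submodule.span k {a : A | ∃ g : A →ₐ[k] k, a = ptTranslate g f}) := by
  classical
  obtain ⟨S, hS⟩ := TensorProduct.exists_finset (Coalgebra.comul (R := k) f)
  have hle : Submodule.span k {a : A | ∃ g : A →ₐ[k] k, a = ptTranslate g f} ≤
      Submodule.span k (↑(S.image Prod.snd) : Set A) := by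
    rw [Submodule.span_le]
    rintro a ⟨g, rfl⟩
    unfold ptTranslate
    rw [hS, map_sum, map_sum]
    refine Submodule.sum_mem _ fun p hp => ?_
    simp only [TensorProduct.map_tmul, TensorProduct.lid_tmul, LinearMap.id_apply]
    exact Submodule.smul_mem _ _ (Submodule.subset_span
      (Finset.mem_coe.mpr (Finset.mem_image_of_mem Prod.snd hp)))
  have : FiniteDimensional k (Submodule.span k (↑(S.image Prod.snd) : Set A)) :=
    FiniteDimensional.span_finset k _
  exact Submodule.finiteDimensional_of_le hle
end
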